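/- Consider the action of B_n = C_2 ≀ S_n on T_n by permuting spikes and swapping a_i ↔ b_i. Every flat F of T_n with e_* ∉ F and rank k lies in the B_n-orbit of F_k^I = {a_1, ..., a_k}, and the stabilizer of F_k^I in B_n is isomorphic to S_k × B_{n−k}. -/

import Mathlib

open Pointwise

inductive TnEdge (n : ℕ) : Type
  | spine : TnEdge n
  | a (i : Fin n) : TnEdge n
  | b (i : Fin n) : TnEdge n
  deriving DecidableEq, Fintype

open TnEdge

def TnIndep (n : ℕ) (S : Set (TnEdge n)) : Prop :=
  (∀ i : Fin n, ¬ ({spine, a i, b i} : Set (TnEdge n)) ⊆ S) ∧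
  (∀ i j : Fin n, i ≠ j → ¬ ({a i, b i, a j, b j} : Set (TnEdge n)) ⊆ S)

/-- The rank of a set in a matroid: the largest size of an independent subset. -/
noncomputable def mRank {α : Type*} (M : Matroid α) (S : Set α) : ℕ :=
  sSup (Set.ncard '' {I | I ⊆ S ∧ M.Indep I})

/-- A permutation of the spikes of the thagomizer matroid. -/
def spikePerm {n : ℕ} (σ : Equiv.Perm (Fin n)) : Equiv.Perm (TnEdge n) where
  toFun e := match e with | spine => spine | a i => a (σ i) | b i => b (σ i)
  invFun e := match e with | spine => spine | a i => a (σ.symm i) | b i => b (σ.symm i)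
  left_inv e := by cases e <;> simp
  right_inv e := by cases e <;> simp

/-- The swap of the two edges of the `i`-th spike. -/
def spikeSwap {n : ℕ} (i : Fin n) : Equiv.Perm (TnEdge n) :=
  Equiv.swap (a i) (b i)

/-- The hyperoctahedral group `B_n`, realized as the group of permutations of the
ground set of `T_n` generated by spike permutations and spike swaps. -/
def BnGroup (n : ℕ) : Subgroup (Equiv.Perm (TnEdge n)) :=
  Subgroup.closure (Set.range (spikePerm (n := n)) ∪ Set.range (spikeSwap (n := n)))

/-- The permutation action of `S_m` on the group `C_2^m`. -/
def permAutHom (m : ℕ) :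
    Equiv.Perm (Fin m) →* MulAut (Fin m → Multiplicative (ZMod 2)) where
  toFun σ := MulEquiv.arrowCongr σ (MulEquiv.refl _)
  map_one' := rfl
  map_mul' _ _ := rfl

/-- The hyperoctahedral group `B_m = C_2 ≀ S_m = C_2^m ⋊ S_m`. -/
def hyperoctahedral (m : ℕ) : Type :=
  SemidirectProduct (Fin m → Multiplicative (ZMod 2)) (Equiv.Perm (Fin m)) (permAutHom m)

noncomputable instance (m : ℕ) : Group (hyperoctahedral m) :=
  inferInstanceAs (Group (SemidirectProduct _ _ _))

/-- The representative flat `F_k^I = {a_1, …, a_k}`. -/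
def FkI (n k : ℕ) : Set (TnEdge n) := {e | ∃ i : Fin n, (i : ℕ) < k ∧ e = a i}

namespace Thag

variable {n : ℕ}

abbrev C2 := Multiplicative (ZMod 2)

lemma c2_cases (u : C2) : u = 1 ∨ u = Multiplicative.ofAdd 1 := by revert u; decide

lemma c2_sq : (Multiplicative.ofAdd (1 : ZMod 2)) * Multiplicative.ofAdd 1 = 1 := by decide

def signFun (ε : Fin n → C2) : TnEdge n → TnEdge n
  | spine => spine
  | a i => if ε i = 1 then a i else b i
  | b i => if ε i = 1 then b i else a i

lemma signFun_invol (ε : Fin n → C2) (x : TnEdge n) : signFun ε (signFun ε x) = x := by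
  cases x with
  | spine => rfl
  | a i => by_cases h : ε i = 1 <;> simp [signFun, h]
  | b i => by_cases h : ε i = 1 <;> simp [signFun, h]

def signPerm (ε : Fin n → C2) : Equiv.Perm (TnEdge n) :=
  ⟨signFun ε, signFun ε, signFun_invol ε, signFun_invol ε⟩

lemma signPerm_one : signPerm (1 : Fin n → C2) = 1 := by
  ext x; cases x <;> simp [signPerm, signFun]

lemma signPerm_mul (ε ε' : Fin n → C2) :
    signPerm (ε * ε') = signPerm ε * signPerm ε' := by
  ext x
  cases x with
  | spine => rfl
  | a i =>
    show signFun (ε * ε') (a i) = signFun ε (signFun ε' (a i))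
    rcases c2_cases (ε i) with h1 | h1 <;> rcases c2_cases (ε' i) with h2 | h2 <;>
      simp [signFun, h1, h2, c2_sq]
  | b i =>
    show signFun (ε * ε') (b i) = signFun ε (signFun ε' (b i))
    rcases c2_cases (ε i) with h1 | h1 <;> rcases c2_cases (ε' i) with h2 | h2 <;>
      simp [signFun, h1, h2, c2_sq]

lemma spikePerm_one : spikePerm (1 : Equiv.Perm (Fin n)) = 1 := by
  ext x; cases x <;> rfl

lemma spikePerm_mul (σ τ : Equiv.Perm (Fin n)) :
    spikePerm (σ * τ) = spikePerm σ * spikePerm τ := by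
  ext x; cases x <;> rfl

lemma permAutHom_apply (σ : Equiv.Perm (Fin n)) (ε : Fin n → C2) (j : Fin n) :
    (permAutHom n σ) ε j = ε (σ.symm j) := rfl

lemma spike_sign_comm (σ : Equiv.Perm (Fin n)) (ε : Fin n → C2) :
    spikePerm σ * signPerm ε = signPerm (permAutHom n σ ε) * spikePerm σ := by
  have key : ∀ i, (permAutHom n σ) ε (σ i) = ε i := by
    intro i; rw [permAutHom_apply, Equiv.symm_apply_apply]
  ext x
  cases x with
  | spine => rfl
  | a i =>
    show spikePerm σ (signFun ε (a i)) = signFun (permAutHom n σ ε) (spikePerm σ (a i))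
    by_cases h : ε i = 1 <;> simp [signFun, h, spikePerm, key]
  | b i =>
    show spikePerm σ (signFun ε (b i)) = signFun (permAutHom n σ ε) (spikePerm σ (b i))
    by_cases h : ε i = 1 <;> simp [signFun, h, spikePerm, key]

def Psi : hyperoctahedral n →* Equiv.Perm (TnEdge n) where
  toFun x := signPerm x.1 * spikePerm x.2
  map_one' := by
    show signPerm 1 * spikePerm 1 = 1
    rw [signPerm_one, spikePerm_one, one_mul]
  map_mul' x y := by
    show signPerm (x.1 * permAutHom n x.2 y.1) * spikePerm (x.2 * y.2) = _
    rw [signPerm_mul, spikePerm_mul]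
    show _ = signPerm x.1 * spikePerm x.2 * (signPerm y.1 * spikePerm y.2)
    conv_rhs => rw [mul_assoc, ← mul_assoc (spikePerm x.right), spike_sign_comm]
    simp [mul_assoc]

lemma Psi_apply_a (ε : Fin n → C2) (σ : Equiv.Perm (Fin n)) (i : Fin n) :
    Psi ⟨ε, σ⟩ (a i) = if ε (σ i) = 1 then a (σ i) else b (σ i) := rfl

lemma Psi_apply_b (ε : Fin n → C2) (σ : Equiv.Perm (Fin n)) (i : Fin n) :
    Psi ⟨ε, σ⟩ (b i) = if ε (σ i) = 1 then b (σ i) else a (σ i) := rfl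

lemma Psi_apply_spine (ε : Fin n → C2) (σ : Equiv.Perm (Fin n)) :
    Psi ⟨ε, σ⟩ spine = spine := rfl

lemma Psi_injective : Function.Injective (Psi (n := n)) := by
  intro x y hxy
  obtain ⟨ε, σ⟩ := x; obtain ⟨ε', σ'⟩ := y
  have ha : ∀ i, Psi ⟨ε, σ⟩ (a i) = Psi ⟨ε', σ'⟩ (a i) := fun i => congrFun (congrArg _ hxy) _
  have hσ : σ = σ' := by
    ext i
    have := ha i
    rw [Psi_apply_a, Psi_apply_a] at this
    split at this <;> split at this <;> simp_all
  subst hσ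
  have hε : ε = ε' := by
    funext j
    have := ha (σ.symm j)
    rw [Psi_apply_a, Psi_apply_a, Equiv.apply_symm_apply] at this
    split at this <;> split at this <;> simp_all
    rcases c2_cases (ε j) with h1 | h1 <;> rcases c2_cases (ε' j) with h2 | h2 <;> simp_all
  subst hε; rfl

end Thag

namespace Thag

variable {n : ℕ}

def delta (i : Fin n) : Fin n → C2 := fun j => if j = i then Multiplicative.ofAdd 1 else 1

lemma spikeSwap_eq_signPerm (i : Fin n) : spikeSwap i = signPerm (delta i) := by
  ext x
  cases x with
  | spine => simp [spikeSwap, signPerm, signFun, Equiv.swap_apply_def]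
  | a j =>
    show Equiv.swap (a i) (b i) (a j) = signFun (delta i) (a j)
    by_cases h : j = i
    · subst h; simp [signFun, delta, (by decide : (Multiplicative.ofAdd (1:ZMod 2)) ≠ 1)]
    · rw [Equiv.swap_apply_of_ne_of_ne (by simp [h]) (by simp)]
      simp [signFun, delta, h]
  | b j =>
    show Equiv.swap (a i) (b i) (b j) = signFun (delta i) (b j)
    by_cases h : j = i
    · subst h; simp [signFun, delta, (by decide : (Multiplicative.ofAdd (1:ZMod 2)) ≠ 1)]
    · rw [Equiv.swap_apply_of_ne_of_ne (by simp) (by simp [h])]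
      simp [signFun, delta, h]

lemma spikePerm_mem (σ : Equiv.Perm (Fin n)) : spikePerm σ ∈ BnGroup n :=
  Subgroup.subset_closure (Or.inl ⟨σ, rfl⟩)

lemma spikeSwap_mem (i : Fin n) : spikeSwap i ∈ BnGroup n :=
  Subgroup.subset_closure (Or.inr ⟨i, rfl⟩)

lemma signPerm_mem (ε : Fin n → C2) : signPerm ε ∈ BnGroup n := by
  have key : ∀ (s : Finset (Fin n)) (ε : Fin n → C2),
      (∀ j, ε j ≠ 1 → j ∈ s) → signPerm ε ∈ BnGroup n := by
    intro s
    induction s using Finset.induction with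
    | empty =>
      intro ε hε
      have : ε = 1 := by
        funext j
        rcases c2_cases (ε j) with h | h
        · exact h
        · exact absurd (hε j (by rw [h]; decide)) (by simp)
      rw [this, signPerm_one]; exact one_mem _
    | @insert i s hi ih =>
      intro ε hε
      set ε' := Function.update ε i 1 with hε'
      have hsupp : ∀ j, ε' j ≠ 1 → j ∈ s := by
        intro j hj
        by_cases hji : j = i
        · subst hji; simp [hε'] at hj
        · have := hε j (by simpa [hε', Function.update_of_ne hji] using hj)
          simp [hji] at this
          exact this
      rcases c2_cases (ε i) with h | h
      · have : ε = ε' := by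
          funext j
          by_cases hji : j = i
          · subst hji; simp [hε', h]
          · simp [hε', Function.update_of_ne hji]
        rw [this]; exact ih ε' hsupp
      · have : ε = delta i * ε' := by
          funext j
          by_cases hji : j = i
          · subst hji; simp [delta, hε', h]
          · simp [delta, hε', hji, Function.update_of_ne hji]
        rw [this, signPerm_mul, ← spikeSwap_eq_signPerm]
        exact mul_mem (spikeSwap_mem i) (ih ε' hsupp)
  exact key Finset.univ ε (fun j _ => Finset.mem_univ j)

lemma Psi_mem (x : hyperoctahedral n) : Psi x ∈ BnGroup n :=
  mul_mem (signPerm_mem x.1) (spikePerm_mem x.2)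

lemma Psi_one_sigma (σ : Equiv.Perm (Fin n)) : Psi ⟨1, σ⟩ = spikePerm σ := by
  show signPerm 1 * spikePerm σ = spikePerm σ
  rw [signPerm_one, one_mul]

lemma Psi_eps_one (ε : Fin n → C2) : Psi ⟨ε, 1⟩ = signPerm ε := by
  show signPerm ε * spikePerm 1 = signPerm ε
  rw [spikePerm_one, mul_one]

lemma BnGroup_le_range : BnGroup n ≤ (Psi (n := n)).range := by
  rw [BnGroup, Subgroup.closure_le]
  rintro g (⟨σ, rfl⟩ | ⟨i, rfl⟩)
  · exact ⟨⟨1, σ⟩, Psi_one_sigma σ⟩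
  · exact ⟨⟨delta i, 1⟩, by rw [Psi_eps_one, spikeSwap_eq_signPerm]⟩

end Thag

namespace Thag

open Classical in
lemma part1 {n k : ℕ} (hk : k ≤ n) (M : Matroid (TnEdge n)) (hE : M.E = Set.univ)
    (hInd : ∀ S, M.Indep S ↔ TnIndep n S)
    (F : Set (TnEdge n)) (hF : M.IsFlat F) (hsp : spine ∉ F) (hrk : mRank M F = k) :
    ∃ g ∈ BnGroup n, ⇑g '' F = FkI n k := by
  classical
  -- no spike has both its edges in F
  have no_pair : ∀ i : Fin n, ¬(a i ∈ F ∧ b i ∈ F) := by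
    rintro i ⟨hai, hbi⟩
    have hFE : F ⊆ M.E := hF.subset_ground
    have hpair : M.Indep {a i, b i} := by
      rw [hInd]
      constructor
      · intro j hj
        have := hj (show spine ∈ ({spine, a j, b j} : Set (TnEdge n)) from Or.inl rfl)
        simp at this
      · intro j l hjl hsub
        have h1 := hsub (show TnEdge.a j ∈ ({a j, b j, a l, b l} : Set (TnEdge n)) by simp)
        have h2 := hsub (show TnEdge.a l ∈ ({a j, b j, a l, b l} : Set (TnEdge n)) by simp)
        simp only [Set.mem_insert_iff, Set.mem_singleton_iff] at h1 h2
        rcases h1 with h1 | h1 <;> rcases h2 with h2 | h2 <;>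
          simp_all
    obtain ⟨I, hI, hsub⟩ := hpair.subset_isBasis_of_subset
      (by intro x hx; rcases hx with rfl | hx; · exact hai
          · rw [Set.mem_singleton_iff] at hx; subst hx; exact hbi) hFE
    have hIbasis : M.IsBasis I (insert spine F) := by
      refine ⟨⟨⟨hI.indep, hI.subset.trans (Set.subset_insert _ _)⟩, ?_⟩, ?_⟩
      · rintro J ⟨hJind, hJsub⟩ hIJ
        have hspJ : spine ∉ J := by
          intro hspJ
          rw [hInd] at hJind
          exact hJind.1 i (by
            rintro x (rfl | rfl | hx)
            · exact hspJ
            · exact hIJ (hsub (Or.inl rfl))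
            · rw [Set.mem_singleton_iff] at hx; subst hx
              exact hIJ (hsub (Or.inr rfl)))
        have hJF : J ⊆ F := by
          intro x hx
          rcases hJsub hx with rfl | hx
          · exact absurd hx hspJ
          · exact hx
        exact hI.1.2 ⟨hJind, hJF⟩ hIJ
      · rw [hE]; exact Set.subset_univ _
    have := hF.subset_of_isBasis_of_isBasis hI hIbasis
    exact hsp (this (Set.mem_insert _ _))
  -- F is independent
  have hFind : M.Indep F := by
    rw [hInd]
    constructor
    · intro i hi; exact hsp (hi (Or.inl rfl))
    · intro i j hij hsub
      exact no_pair i ⟨hsub (by simp), hsub (by simp)⟩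
  -- ncard F = k
  have hncard : F.ncard = k := by
    rw [← hrk, mRank]
    have hub : ∀ m ∈ Set.ncard '' {I | I ⊆ F ∧ M.Indep I}, m ≤ F.ncard := by
      rintro m ⟨I, ⟨hIF, _⟩, rfl⟩
      exact Set.ncard_le_ncard hIF (Set.toFinite F)
    exact Nat.le_antisymm (le_csSup ⟨F.ncard, hub⟩ ⟨F, ⟨Set.Subset.rfl, hFind⟩, rfl⟩)
      (csSup_le ⟨F.ncard, ⟨F, ⟨Set.Subset.rfl, hFind⟩, rfl⟩⟩ hub)
  -- the index set
  set S : Set (Fin n) := {i | a i ∈ F ∨ b i ∈ F} with hS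
  set f : Fin n → TnEdge n := fun i => if a i ∈ F then a i else b i with hf
  have hfS : F = f '' S := by
    ext x
    constructor
    · intro hx
      cases x with
      | spine => exact absurd hx hsp
      | a i =>
        exact ⟨i, Or.inl hx, by simp [hf, hx]⟩
      | b i =>
        have hai : a i ∉ F := fun h => no_pair i ⟨h, hx⟩
        exact ⟨i, Or.inr hx, by simp [hf, hai]⟩
    · rintro ⟨i, hi, rfl⟩
      rcases hi with hi | hi
      · simpa [hf, hi] using hi
      · have hai : a i ∉ F := fun h => no_pair i ⟨h, hi⟩
        simpa [hf, hai] using hi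
  have hinj : Set.InjOn f S := by
    intro i hi j hj hij
    simp only [hf] at hij
    split_ifs at hij <;>
      first
        | exact TnEdge.a.inj hij
        | exact TnEdge.b.inj hij
        | exact absurd hij (by simp)
  have hScard : S.ncard = k := by
    rw [← hncard, hfS, Set.ncard_image_of_injOn hinj]
  -- build the permutation
  have hcard1 : Fintype.card {i : Fin n // i ∈ S} = k := by
    rw [← Nat.card_eq_fintype_card, Nat.card_coe_set_eq, hScard]
  have hcard2 : Fintype.card {i : Fin n // (i : ℕ) < k} = k := by
    have e : {i : Fin n // (i : ℕ) < k} ≃ Fin k :=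
      ⟨fun j => ⟨j.1, j.2⟩, fun j => ⟨⟨j.1, lt_of_lt_of_le j.2 hk⟩, j.2⟩,
        fun j => rfl, fun j => rfl⟩
    rw [Fintype.card_congr e, Fintype.card_fin]
  have hcardc : Fintype.card {i : Fin n // ¬ i ∈ S} = Fintype.card {i : Fin n // ¬ (i : ℕ) < k} := by
    have h1 : Fintype.card {i : Fin n // ¬ i ∈ S} = n - k := by
      rw [Fintype.card_subtype_compl, hcard1, Fintype.card_fin]
    have h2 : Fintype.card {i : Fin n // ¬ (i : ℕ) < k} = n - k := by
      rw [Fintype.card_subtype_compl, hcard2, Fintype.card_fin]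
    rw [h1, h2]
  let e₁ : {i : Fin n // i ∈ S} ≃ {i : Fin n // (i : ℕ) < k} :=
    Fintype.equivOfCardEq (by rw [hcard1, hcard2])
  let e₂ : {i : Fin n // ¬ i ∈ S} ≃ {i : Fin n // ¬ (i : ℕ) < k} :=
    Fintype.equivOfCardEq hcardc
  let σ : Equiv.Perm (Fin n) :=
    (Equiv.sumCompl (· ∈ S)).symm.trans ((e₁.sumCongr e₂).trans (Equiv.sumCompl (fun i : Fin n => (i : ℕ) < k)))
  have hσ_mem : ∀ i, i ∈ S → ((σ i : Fin n) : ℕ) < k := by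
    intro i hi
    have : (Equiv.sumCompl (· ∈ S)).symm i = Sum.inl ⟨i, hi⟩ := by
      exact Equiv.sumCompl_symm_apply_of_pos hi
    simp only [σ, Equiv.trans_apply, this, Equiv.sumCongr_apply, Sum.map_inl,
      Equiv.sumCompl_apply_inl]
    exact (e₁ ⟨i, hi⟩).2
  have hσ_nmem : ∀ i, i ∉ S → ¬ ((σ i : Fin n) : ℕ) < k := by
    intro i hi
    have : (Equiv.sumCompl (· ∈ S)).symm i = Sum.inr ⟨i, hi⟩ := by
      exact Equiv.sumCompl_symm_apply_of_neg hi
    simp only [σ, Equiv.trans_apply, this, Equiv.sumCongr_apply, Sum.map_inr,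
      Equiv.sumCompl_apply_inr]
    exact (e₂ ⟨i, hi⟩).2
  set ε : Fin n → C2 := fun j => if b (σ.symm j) ∈ F then Multiplicative.ofAdd 1 else 1 with hε
  refine ⟨Psi ⟨ε, σ⟩, Psi_mem _, ?_⟩
  ext x
  constructor
  · rintro ⟨y, hy, rfl⟩
    cases y with
    | spine => exact absurd hy hsp
    | a i =>
      have hbi : b i ∉ F := fun h => no_pair i ⟨hy, h⟩
      have hε1 : ε (σ i) = 1 := by simp [hε, Equiv.symm_apply_apply, hbi]
      rw [Psi_apply_a, if_pos hε1]
      exact ⟨σ i, hσ_mem i (Or.inl hy), rfl⟩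
    | b i =>
      have hε1 : ε (σ i) = Multiplicative.ofAdd 1 := by simp [hε, Equiv.symm_apply_apply, hy]
      rw [Psi_apply_b, if_neg (by rw [hε1]; decide)]
      exact ⟨σ i, hσ_mem i (Or.inr hy), rfl⟩
  · rintro ⟨j, hj, rfl⟩
    set i := σ.symm j with hi
    have hji : σ i = j := Equiv.apply_symm_apply σ j
    have hiS : i ∈ S := by
      by_contra h
      exact hσ_nmem i h (by rw [hji]; exact hj)
    by_cases hbi : b i ∈ F
    · refine ⟨b i, hbi, ?_⟩
      have hε1 : ε (σ i) = Multiplicative.ofAdd 1 := by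
        simp [hε, Equiv.symm_apply_apply, hbi]
      rw [Psi_apply_b, if_neg (by rw [hε1]; decide), hji]
    · have hai : a i ∈ F := hiS.resolve_right hbi
      refine ⟨a i, hai, ?_⟩
      have hε1 : ε (σ i) = 1 := by simp [hε, Equiv.symm_apply_apply, hbi]
      rw [Psi_apply_a, if_pos hε1, hji]

end Thag

namespace Thag

open Equiv

variable {n k : ℕ}

def bigE (hk : k ≤ n) : Fin k ⊕ Fin (n - k) ≃ Fin n :=
  finSumFinEquiv.trans (finCongr (by omega))

lemma bigE_inl (hk : k ≤ n) (x : Fin k) : (bigE hk (Sum.inl x) : ℕ) = x := by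
  simp [bigE]

lemma bigE_inr (hk : k ≤ n) (y : Fin (n - k)) : (bigE hk (Sum.inr y) : ℕ) = k + y := by
  simp [bigE]

lemma eq_inl_of_lt (hk : k ≤ n) {i : Fin n} (h : (i : ℕ) < k) :
    i = bigE hk (Sum.inl ⟨i, h⟩) := Fin.ext (by rw [bigE_inl])

lemma eq_inr_of_le (hk : k ≤ n) {i : Fin n} (h : k ≤ (i : ℕ)) :
    i = bigE hk (Sum.inr ⟨(i : ℕ) - k, by omega⟩) := Fin.ext (by
      rw [bigE_inr]
      show (i : ℕ) = k + ((i : ℕ) - k)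
      omega)

lemma bigE_surj (hk : k ≤ n) (i : Fin n) :
    (∃ x, i = bigE hk (Sum.inl x)) ∨ (∃ y, i = bigE hk (Sum.inr y)) := by
  rcases lt_or_ge (i : ℕ) k with h | h
  · exact Or.inl ⟨_, eq_inl_of_lt hk h⟩
  · exact Or.inr ⟨_, eq_inr_of_le hk h⟩

def sigmaOf (hk : k ≤ n) (τ : Perm (Fin k)) (ρ : Perm (Fin (n - k))) : Perm (Fin n) :=
  (bigE hk).permCongr (τ.sumCongr ρ)

lemma sigmaOf_inl (hk : k ≤ n) (τ : Perm (Fin k)) (ρ : Perm (Fin (n - k))) (x : Fin k) :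
    sigmaOf hk τ ρ (bigE hk (Sum.inl x)) = bigE hk (Sum.inl (τ x)) := by
  simp [sigmaOf, Equiv.permCongr_apply]

lemma sigmaOf_inr (hk : k ≤ n) (τ : Perm (Fin k)) (ρ : Perm (Fin (n - k))) (y : Fin (n - k)) :
    sigmaOf hk τ ρ (bigE hk (Sum.inr y)) = bigE hk (Sum.inr (ρ y)) := by
  simp [sigmaOf, Equiv.permCongr_apply]

lemma sigmaOf_mul (hk : k ≤ n) (τ₁ τ₂ : Perm (Fin k)) (ρ₁ ρ₂ : Perm (Fin (n - k))) :
    sigmaOf hk (τ₁ * τ₂) (ρ₁ * ρ₂) = sigmaOf hk τ₁ ρ₁ * sigmaOf hk τ₂ ρ₂ := by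
  ext i
  rcases bigE_surj hk i with ⟨x, rfl⟩ | ⟨y, rfl⟩
  · rw [Equiv.Perm.mul_apply, sigmaOf_inl, sigmaOf_inl, sigmaOf_inl, Equiv.Perm.mul_apply]
  · rw [Equiv.Perm.mul_apply, sigmaOf_inr, sigmaOf_inr, sigmaOf_inr, Equiv.Perm.mul_apply]

lemma sigmaOf_one (hk : k ≤ n) : sigmaOf hk 1 1 = 1 := by
  ext i
  rcases bigE_surj hk i with ⟨x, rfl⟩ | ⟨y, rfl⟩
  · rw [sigmaOf_inl]; rfl
  · rw [sigmaOf_inr]; rfl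

lemma sigmaOf_inv (hk : k ≤ n) (τ : Perm (Fin k)) (ρ : Perm (Fin (n - k))) :
    (sigmaOf hk τ ρ)⁻¹ = sigmaOf hk τ⁻¹ ρ⁻¹ := by
  apply inv_eq_of_mul_eq_one_right
  rw [← sigmaOf_mul]
  simp [sigmaOf_one]

lemma sigmaOf_symm_inl (hk : k ≤ n) (τ : Perm (Fin k)) (ρ : Perm (Fin (n - k))) (x : Fin k) :
    (sigmaOf hk τ ρ).symm (bigE hk (Sum.inl x)) = bigE hk (Sum.inl (τ⁻¹ x)) := by
  rw [← Equiv.Perm.inv_def, sigmaOf_inv, sigmaOf_inl]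

lemma sigmaOf_symm_inr (hk : k ≤ n) (τ : Perm (Fin k)) (ρ : Perm (Fin (n - k))) (y : Fin (n - k)) :
    (sigmaOf hk τ ρ).symm (bigE hk (Sum.inr y)) = bigE hk (Sum.inr (ρ⁻¹ y)) := by
  rw [← Equiv.Perm.inv_def, sigmaOf_inv, sigmaOf_inr]

def epsOf (hk : k ≤ n) (ε : Fin (n - k) → C2) : Fin n → C2 :=
  fun i => Sum.elim (fun _ => 1) ε ((bigE hk).symm i)

lemma epsOf_inl (hk : k ≤ n) (ε : Fin (n - k) → C2) (x : Fin k) :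
    epsOf hk ε (bigE hk (Sum.inl x)) = 1 := by simp [epsOf]

lemma epsOf_inr (hk : k ≤ n) (ε : Fin (n - k) → C2) (y : Fin (n - k)) :
    epsOf hk ε (bigE hk (Sum.inr y)) = ε y := by simp [epsOf]

lemma epsOf_one (hk : k ≤ n) : epsOf hk (1 : Fin (n - k) → C2) = 1 := by
  funext i
  rcases bigE_surj hk i with ⟨x, rfl⟩ | ⟨y, rfl⟩
  · rw [epsOf_inl]; rfl
  · rw [epsOf_inr]; rfl

lemma epsOf_mul (hk : k ≤ n) (ε₁ ε₂ : Fin (n - k) → C2) :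
    epsOf hk (ε₁ * ε₂) = epsOf hk ε₁ * epsOf hk ε₂ := by
  funext i
  rcases bigE_surj hk i with ⟨x, rfl⟩ | ⟨y, rfl⟩
  · rw [Pi.mul_apply, epsOf_inl, epsOf_inl, epsOf_inl, one_mul]
  · rw [Pi.mul_apply, epsOf_inr, epsOf_inr, epsOf_inr, Pi.mul_apply]

lemma hyp_ext {m : ℕ} {x y : hyperoctahedral m} (h1 : x.1 = y.1) (h2 : x.2 = y.2) : x = y :=
  SemidirectProduct.ext h1 h2

def PhiFun (hk : k ≤ n) (p : Perm (Fin k) × hyperoctahedral (n - k)) : hyperoctahedral n :=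
  ⟨epsOf hk p.2.1, sigmaOf hk p.1 p.2.2⟩

lemma PhiFun_left (hk : k ≤ n) (p : Perm (Fin k) × hyperoctahedral (n - k)) :
    (PhiFun hk p).1 = epsOf hk p.2.1 := rfl

lemma PhiFun_right (hk : k ≤ n) (p : Perm (Fin k) × hyperoctahedral (n - k)) :
    (PhiFun hk p).2 = sigmaOf hk p.1 p.2.2 := rfl

def PhiHom (hk : k ≤ n) : Perm (Fin k) × hyperoctahedral (n - k) →* hyperoctahedral n where
  toFun := PhiFun hk
  map_one' := by
    refine hyp_ext ?_ ?_
    · show epsOf hk 1 = 1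
      exact epsOf_one hk
    · show sigmaOf hk 1 1 = 1
      exact sigmaOf_one hk
  map_mul' p q := by
    refine hyp_ext ?_ ?_
    · show epsOf hk (p.2.1 * (permAutHom (n - k) p.2.2) q.2.1)
        = epsOf hk p.2.1 * (permAutHom n (sigmaOf hk p.1 p.2.2)) (epsOf hk q.2.1)
      rw [epsOf_mul]
      congr 1
      funext i
      rw [permAutHom_apply]
      rcases bigE_surj hk i with ⟨x, rfl⟩ | ⟨y, rfl⟩
      · rw [epsOf_inl, sigmaOf_symm_inl, epsOf_inl]
      · rw [epsOf_inr, sigmaOf_symm_inr, epsOf_inr, permAutHom_apply, ← Equiv.Perm.inv_def]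
    · show sigmaOf hk (p.1 * q.1) (p.2.2 * q.2.2)
        = sigmaOf hk p.1 p.2.2 * sigmaOf hk q.1 q.2.2
      exact sigmaOf_mul hk _ _ _ _

lemma PhiHom_injective (hk : k ≤ n) : Function.Injective (PhiHom hk) := by
  intro p q h
  have h1 : epsOf hk p.2.1 = epsOf hk q.2.1 := congrArg SemidirectProduct.left h
  have h2 : sigmaOf hk p.1 p.2.2 = sigmaOf hk q.1 q.2.2 := congrArg SemidirectProduct.right h
  have hτ : p.1 = q.1 := by
    ext x
    have := DFunLike.congr_fun h2 (bigE hk (Sum.inl x))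
    rw [sigmaOf_inl, sigmaOf_inl] at this
    have := (bigE hk).injective this
    exact congrArg Fin.val (Sum.inl.inj this)
  have hρ : p.2.2 = q.2.2 := by
    ext y
    have := DFunLike.congr_fun h2 (bigE hk (Sum.inr y))
    rw [sigmaOf_inr, sigmaOf_inr] at this
    have := (bigE hk).injective this
    exact congrArg Fin.val (Sum.inr.inj this)
  have hε : p.2.1 = q.2.1 := by
    funext y
    have := congrFun h1 (bigE hk (Sum.inr y))
    rwa [epsOf_inr, epsOf_inr] at this
  exact Prod.ext hτ (hyp_ext hε hρ)

lemma Psi_apply_a' (x : hyperoctahedral n) (i : Fin n) :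
    Psi x (a i) = if x.1 (x.2 i) = 1 then a (x.2 i) else b (x.2 i) := rfl

lemma Psi_apply_b' (x : hyperoctahedral n) (i : Fin n) :
    Psi x (b i) = if x.1 (x.2 i) = 1 then b (x.2 i) else a (x.2 i) := rfl

lemma Psi_PhiFun_image (hk : k ≤ n) (p : Perm (Fin k) × hyperoctahedral (n - k)) :
    ⇑(Psi (PhiFun hk p)) '' FkI n k = FkI n k := by
  ext z
  constructor
  · rintro ⟨y, ⟨i, hi, rfl⟩, rfl⟩
    have hval : Psi (PhiFun hk p) (a i) = a (bigE hk (Sum.inl (p.1 ⟨i, hi⟩))) := by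
      conv_lhs => rw [eq_inl_of_lt hk hi]
      rw [Psi_apply_a', PhiFun_left, PhiFun_right, sigmaOf_inl, epsOf_inl, if_pos rfl]
    rw [hval]
    exact ⟨_, by rw [bigE_inl]; exact (p.1 ⟨i, hi⟩).2, rfl⟩
  · rintro ⟨j, hj, rfl⟩
    refine ⟨a (bigE hk (Sum.inl (p.1⁻¹ ⟨j, hj⟩))),
      ⟨_, by rw [bigE_inl]; exact (p.1⁻¹ ⟨j, hj⟩).2, rfl⟩, ?_⟩
    rw [Psi_apply_a', PhiFun_left, PhiFun_right, sigmaOf_inl, epsOf_inl, if_pos rfl,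
      Equiv.Perm.inv_def, Equiv.apply_symm_apply]
    exact congrArg a (eq_inl_of_lt hk hj).symm

lemma subgroup_smul_set (u : BnGroup n) (S : Set (TnEdge n)) :
    u • S = ⇑(u : Equiv.Perm (TnEdge n)) '' S := rfl

noncomputable def Theta (hk : k ≤ n) :
    Perm (Fin k) × hyperoctahedral (n - k) →* MulAction.stabilizer (BnGroup n) (FkI n k) :=
  MonoidHom.codRestrict
    (MonoidHom.codRestrict (Psi.comp (PhiHom hk)) (BnGroup n) (fun p => Psi_mem _))
    (MulAction.stabilizer (BnGroup n) (FkI n k))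
    (fun p => by
      rw [MulAction.mem_stabilizer_iff, subgroup_smul_set]
      exact Psi_PhiFun_image hk p)

lemma Theta_injective (hk : k ≤ n) : Function.Injective (Theta hk) := by
  intro p q h
  apply PhiHom_injective hk
  apply Psi_injective
  exact Subtype.ext_iff.mp (Subtype.ext_iff.mp h)

def kEquiv (hk : k ≤ n) : {i : Fin n // (i : ℕ) < k} ≃ Fin k where
  toFun i := ⟨i.1, i.2⟩
  invFun x := ⟨⟨x, lt_of_lt_of_le x.2 hk⟩, x.2⟩
  left_inv i := rfl
  right_inv x := rfl

def mEquiv (hk : k ≤ n) : {i : Fin n // ¬ (i : ℕ) < k} ≃ Fin (n - k) where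
  toFun i := ⟨(i.1 : ℕ) - k, by have := i.1.2; have := i.2; omega⟩
  invFun x := ⟨⟨k + x, by have := x.2; omega⟩, by show ¬ k + (x : ℕ) < k; omega⟩
  left_inv i := by
    apply Subtype.ext; apply Fin.ext
    have := i.2
    show k + ((i.1 : ℕ) - k) = i.1
    omega
  right_inv x := by
    apply Fin.ext
    show (k + (x : ℕ)) - k = x
    omega

lemma Theta_surjective (hk : k ≤ n) : Function.Surjective (Theta hk) := by
  rintro ⟨⟨gp, hgB⟩, hgst⟩
  obtain ⟨x, hx⟩ := BnGroup_le_range hgB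
  rw [MulAction.mem_stabilizer_iff, subgroup_smul_set] at hgst
  simp only at hgst
  -- step 1
  have step1 : ∀ i : Fin n, (i : ℕ) < k → ((x.2 i : Fin n) : ℕ) < k ∧ x.1 (x.2 i) = 1 := by
    intro i hi
    have hmem : gp (a i) ∈ FkI n k := by
      rw [← hgst]; exact ⟨a i, ⟨i, hi, rfl⟩, rfl⟩
    rw [← hx, Psi_apply_a'] at hmem
    by_cases hc : x.1 (x.2 i) = 1
    · rw [if_pos hc] at hmem
      obtain ⟨j, hj, hja⟩ := hmem
      exact ⟨by rw [TnEdge.a.inj hja]; exact hj, hc⟩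
    · rw [if_neg hc] at hmem
      obtain ⟨j, hj, hja⟩ := hmem
      exact absurd hja (by simp)
  -- step 2
  have step2 : ∀ i : Fin n, ((x.2 i : Fin n) : ℕ) < k → (i : ℕ) < k := by
    set f : {i : Fin n // (i : ℕ) < k} → {i : Fin n // (i : ℕ) < k} :=
      fun i => ⟨x.2 i.1, (step1 i.1 i.2).1⟩ with hfdef
    have hfinj : Function.Injective f := by
      intro u v huv
      apply Subtype.ext
      exact x.2.injective (Subtype.ext_iff.mp huv)
    have hfsurj : Function.Surjective f := Finite.injective_iff_surjective.mp hfinj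
    intro i hi
    obtain ⟨u, hu⟩ := hfsurj ⟨x.2 i, hi⟩
    have : x.2 u.1 = x.2 i := Subtype.ext_iff.mp hu
    have : u.1 = i := x.2.injective this
    rw [← this]; exact u.2
  have hiff : ∀ i : Fin n, (i : ℕ) < k ↔ ((x.2 i : Fin n) : ℕ) < k :=
    fun i => ⟨fun h => (step1 i h).1, step2 i⟩
  -- step 3
  have step3 : ∀ j : Fin n, (j : ℕ) < k → x.1 j = 1 := by
    intro j hj
    have h1 : ((x.2 (x.2.symm j) : Fin n) : ℕ) < k := by
      rw [Equiv.apply_symm_apply]; exact hj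
    have h2 := (step1 _ (step2 _ h1)).2
    rwa [Equiv.apply_symm_apply] at h2
  -- build the preimage
  set τ : Perm (Fin k) := (kEquiv hk).permCongr (x.2.subtypePerm (fun i => (hiff i).symm)) with hτ
  set ρ : Perm (Fin (n - k)) :=
    (mEquiv hk).permCongr (x.2.subtypePerm (fun i => not_iff_not.mpr (hiff i).symm)) with hρ
  set εm : Fin (n - k) → C2 := fun y => x.1 (bigE hk (Sum.inr y)) with hεm
  have hPhi : PhiFun hk (τ, ⟨εm, ρ⟩) = x := by
    refine hyp_ext ?_ ?_
    · show epsOf hk εm = x.1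
      funext i
      rcases bigE_surj hk i with ⟨x₀, rfl⟩ | ⟨y₀, rfl⟩
      · rw [epsOf_inl]
        exact (step3 _ (by rw [bigE_inl]; exact x₀.2)).symm
      · rw [epsOf_inr]
    · show sigmaOf hk τ ρ = x.2
      ext i
      rcases bigE_surj hk i with ⟨x₀, rfl⟩ | ⟨y₀, rfl⟩
      · have hb : bigE hk (Sum.inl x₀) = ⟨(x₀ : ℕ), lt_of_lt_of_le x₀.2 hk⟩ :=
          Fin.ext (by rw [bigE_inl])
        rw [sigmaOf_inl, bigE_inl, hb, hτ]
        rfl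
      · have hlt : k + (y₀ : ℕ) < n := by have := y₀.2; omega
        have hb : bigE hk (Sum.inr y₀) = ⟨k + (y₀ : ℕ), hlt⟩ := Fin.ext (by rw [bigE_inr])
        have hge : ¬ ((x.2 (⟨k + (y₀ : ℕ), hlt⟩ : Fin n) : Fin n) : ℕ) < k :=
          (not_iff_not.mpr (hiff ⟨k + (y₀ : ℕ), hlt⟩)).mp (by show ¬ k + (y₀ : ℕ) < k; omega)
        rw [sigmaOf_inr, bigE_inr, hb, hρ]
        show k + (((x.2 (⟨k + (y₀ : ℕ), hlt⟩ : Fin n) : Fin n) : ℕ) - k)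
          = ((x.2 (⟨k + (y₀ : ℕ), hlt⟩ : Fin n) : Fin n) : ℕ)
        omega
  refine ⟨(τ, ⟨εm, ρ⟩), ?_⟩
  apply Subtype.ext
  apply Subtype.ext
  show Psi (PhiFun hk (τ, ⟨εm, ρ⟩)) = gp
  rw [hPhi, hx]

end Thag

theorem thagomizer_typeI_orbit_and_stabilizer (n k : ℕ) (hk : k ≤ n)
    (M : Matroid (TnEdge n)) (hE : M.E = Set.univ)
    (hInd : ∀ S, M.Indep S ↔ TnIndep n S)
    (F : Set (TnEdge n)) (hF : M.IsFlat F) (hsp : spine ∉ F) (hrk : mRank M F = k) :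
    (∃ g ∈ BnGroup n, ⇑g '' F = FkI n k) ∧
    Nonempty (MulAction.stabilizer (BnGroup n) (FkI n k) ≃*
      Equiv.Perm (Fin k) × hyperoctahedral (n - k)) := by
  constructor
  · exact Thag.part1 hk M hE hInd F hF hsp hrk
  · exact ⟨(MulEquiv.ofBijective (Thag.Theta hk)
      ⟨Thag.Theta_injective hk, Thag.Theta_surjective hk⟩).symm⟩
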